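/- arXiv:2510.06441 — 4 statements merged into one kernel-verified Lean document; each statement's English description precedes it below -/
import Mathlib

section
/- Let λ > 1, let q ≥ 2 be an integer, and set α = log q / log λ. Then there exist constants 0 < c ≤ C (depending on q and λ) such that for all sufficiently large integers m, c·m^{-α} ≤ ∑_{a=1}^∞ q^{-a} (1 - (λ-1)/(λ^a - 1))^m ≤ C·m^{-α}. -/
open Real Filter Finset

private lemma aux_one_sub_le_exp_neg (x : ℝ) : 1 - x ≤ Real.exp (-x) := by
  have := Real.add_one_le_exp (-x); linarith

private lemma aux_exp_neg_two_le {x : ℝ} (h0 : 0 ≤ x) (h : x ≤ 1/2) :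
    Real.exp (-(2*x)) ≤ 1 - x := by
  have h1 : 1 + 2*x ≤ Real.exp (2*x) := by have := Real.add_one_le_exp (2*x); linarith
  have h2 : Real.exp (-(2*x)) * Real.exp (2*x) = 1 := by rw [← Real.exp_add]; simp
  have h3 : (0:ℝ) < Real.exp (2*x) := Real.exp_pos _
  nlinarith [mul_le_mul_of_nonneg_left h1 (by linarith : (0:ℝ) ≤ 1 - x)]

section main
variable {l : ℝ} (hl : 1 < l)
include hl

private lemma aux_pow_pos (a : ℕ) : 0 < l ^ (a+1) - 1 := by
  have : (1:ℝ) < l ^ (a+1) := one_lt_pow₀ hl (Nat.succ_ne_zero a)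
  linarith

private lemma aux_g_nonneg (a : ℕ) : 0 ≤ 1 - (l - 1) / (l ^ (a+1) - 1) := by
  have h1 : l ≤ l ^ (a+1) := le_self_pow₀ hl.le (Nat.succ_ne_zero a)
  have h2 := aux_pow_pos hl a
  have : (l - 1) / (l ^ (a+1) - 1) ≤ 1 := (div_le_one h2).mpr (by linarith)
  linarith

private lemma aux_g_le_one (a : ℕ) : 1 - (l - 1) / (l ^ (a+1) - 1) ≤ 1 := by
  have h2 := aux_pow_pos hl a
  have : 0 < (l - 1) / (l ^ (a+1) - 1) := div_pos (by linarith) h2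
  linarith

private lemma aux_g_le_exp (a : ℕ) :
    1 - (l - 1) / (l ^ (a+1) - 1) ≤ Real.exp (-((l-1) / l ^ (a+1))) := by
  have h2 := aux_pow_pos hl a
  have hp : (0:ℝ) < l ^ (a+1) := by linarith
  have h3 : (l - 1) / l ^ (a+1) ≤ (l - 1) / (l ^ (a+1) - 1) :=
    div_le_div_of_nonneg_left (by linarith) h2 (by linarith)
  calc 1 - (l - 1) / (l ^ (a+1) - 1) ≤ 1 - (l - 1) / l ^ (a+1) := by linarith
    _ ≤ Real.exp (-((l-1) / l ^ (a+1))) := aux_one_sub_le_exp_neg _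

private lemma aux_summable (q : ℕ) (hq : 2 ≤ q) (m : ℕ) :
    Summable (fun a : ℕ => ((q : ℝ) ^ (a + 1))⁻¹ * (1 - (l - 1) / (l ^ (a + 1) - 1)) ^ m) := by
  have hq1 : (1:ℝ) < q := by exact_mod_cast lt_of_lt_of_le one_lt_two hq
  have hq0 : (0:ℝ) < q := by linarith
  refine Summable.of_nonneg_of_le
    (f := fun a : ℕ => ((q:ℝ)⁻¹) ^ a)
    (fun a => mul_nonneg (by positivity) (pow_nonneg (aux_g_nonneg hl a) m))
    (fun a => ?_) ?_
  ·
    have h1 : (1 - (l - 1) / (l ^ (a + 1) - 1)) ^ m ≤ 1 :=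
      pow_le_one₀ (aux_g_nonneg hl a) (aux_g_le_one hl a)
    have h2 : ((q : ℝ) ^ (a + 1))⁻¹ ≤ ((q:ℝ)⁻¹) ^ a := by
      rw [← inv_pow]
      exact pow_le_pow_of_le_one (by positivity) (by
        rw [inv_le_one_iff₀]; right; linarith) (Nat.le_succ a)
    calc ((q : ℝ) ^ (a + 1))⁻¹ * (1 - (l - 1) / (l ^ (a + 1) - 1)) ^ m
        ≤ ((q : ℝ) ^ (a + 1))⁻¹ * 1 :=
          mul_le_mul_of_nonneg_left h1 (by positivity)
      _ = ((q : ℝ) ^ (a + 1))⁻¹ := mul_one _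
      _ ≤ ((q:ℝ)⁻¹) ^ a := h2
  · exact summable_geometric_of_lt_one (by positivity) (by
      rw [inv_lt_one_iff₀]; right; exact hq1)

end main

section bounds
variable {l : ℝ} (hl : 1 < l) {q : ℕ} (hq : 2 ≤ q)
include hl hq

private lemma aux_psi_summable :
    Summable (fun j : ℕ => (q:ℝ)^j * Real.exp (-((l-1)/l * l^j))) := by
  have hq1 : (1:ℝ) < q := by exact_mod_cast lt_of_lt_of_le one_lt_two hq
  have hq0 : (0:ℝ) < q := by linarith
  have hl0 : (0:ℝ) < l := by linarith
  set c2 : ℝ := (l-1)/l with hc2def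
  have hc2 : (0:ℝ) < c2 := div_pos (by linarith) hl0
  apply summable_of_ratio_norm_eventually_le (r := 1/2) (by norm_num)
  have htend : Tendsto (fun j : ℕ => (q:ℝ) * Real.exp (-(c2 * (l-1) * l^j))) atTop (nhds 0) := by
    have h1 : Tendsto (fun j : ℕ => (l:ℝ)^j) atTop atTop := tendsto_pow_atTop_atTop_of_one_lt hl
    have h2 : Tendsto (fun j : ℕ => c2 * (l-1) * l^j) atTop atTop :=
      h1.const_mul_atTop (mul_pos hc2 (by linarith))
    have h3 : Tendsto (fun j : ℕ => Real.exp (-(c2 * (l-1) * l^j))) atTop (nhds 0) :=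
      Real.tendsto_exp_comp_nhds_zero.mpr (tendsto_neg_atBot_iff.mpr h2)
    simpa using h3.const_mul (q:ℝ)
  filter_upwards [htend.eventually_lt_const (by norm_num : (0:ℝ) < 1/2)] with j hj
  have hψj : (0:ℝ) < (q:ℝ)^j * Real.exp (-(c2 * l^j)) := by positivity
  have hrec : (q:ℝ)^(j+1) * Real.exp (-(c2 * l^(j+1))) =
      ((q:ℝ) * Real.exp (-(c2 * (l-1) * l^j))) * ((q:ℝ)^j * Real.exp (-(c2 * l^j))) := by
    have hexp : Real.exp (-(c2 * l^(j+1))) =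
        Real.exp (-(c2*(l-1)*l^j)) * Real.exp (-(c2*l^j)) := by
      rw [← Real.exp_add]; congr 1; rw [pow_succ]; ring
    rw [pow_succ, hexp]; ring
  rw [Real.norm_eq_abs, Real.norm_eq_abs, abs_of_pos (by positivity), abs_of_pos hψj, hrec]
  exact mul_le_mul_of_nonneg_right hj.le hψj.le

private lemma key_lower :
    ∃ c : ℝ, 0 < c ∧ ∃ M : ℕ, ∀ m : ℕ, M ≤ m →
      c * (m : ℝ) ^ (-(Real.log q / Real.log l)) ≤
        ∑' a : ℕ, ((q : ℝ) ^ (a + 1))⁻¹ * (1 - (l - 1) / (l ^ (a + 1) - 1)) ^ m := by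
  have hl0 : (0:ℝ) < l := by linarith
  have hq1 : (1:ℝ) < q := by exact_mod_cast lt_of_lt_of_le one_lt_two hq
  have hq0 : (0:ℝ) < q := by linarith
  have hloq : 0 < Real.log l := Real.log_pos hl
  refine ⟨((q:ℝ)^2)⁻¹ * Real.exp (-(2*(l-1))), by positivity,
    ⌈2*(l-1) + (l-1)⁻¹⌉₊ + 2, fun m hm => ?_⟩
  have hmM : (2*(l-1) + (l-1)⁻¹ : ℝ) + 2 ≤ (m:ℝ) := by
    have h1 : (2*(l-1) + (l-1)⁻¹ : ℝ) ≤ ⌈2*(l-1) + (l-1)⁻¹⌉₊ := Nat.le_ceil _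
    have h2 : ((⌈2*(l-1) + (l-1)⁻¹⌉₊ + 2 : ℕ) : ℝ) ≤ (m:ℝ) := by exact_mod_cast hm
    push_cast at h2; linarith
  have hl1 : (0:ℝ) < l - 1 := by linarith
  have hli : (0:ℝ) < (l-1)⁻¹ := by positivity
  have hm1 : (1:ℝ) ≤ m := by linarith
  have hmpos : (0:ℝ) < m := by linarith
  have hm2l : 2*(l-1) ≤ (m:ℝ) := by linarith
  have hmli : (l-1)⁻¹ ≤ (m:ℝ) := by linarith
  have hmne : (m:ℝ) ≠ 0 := ne_of_gt hmpos
  have hu0 : 0 ≤ (l-1)/(m:ℝ) := by positivity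
  have hu2 : (l-1)/(m:ℝ) ≤ 1/2 := by
    rw [div_le_iff₀ hmpos]; linarith
  set y : ℝ := Real.log m / Real.log l with hy
  have hy0 : 0 ≤ y := div_nonneg (Real.log_nonneg hm1) hloq.le
  have hly : l ^ (y:ℝ) = (m:ℝ) := by
    rw [Real.rpow_def_of_pos hl0, mul_div_cancel₀ _ (ne_of_gt hloq), Real.exp_log hmpos]
  set a₀ : ℕ := ⌈y⌉₊ with ha₀
  have hcast : (y:ℝ) ≤ (a₀:ℝ) := Nat.le_ceil y
  have hln : l * (m:ℝ) ≤ l ^ (a₀+1) := by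
    have h1 : l ^ ((a₀+1 : ℕ) : ℝ) = l ^ (a₀+1) := Real.rpow_natCast l (a₀+1)
    have h2 : l ^ (y+1 : ℝ) ≤ l ^ ((a₀+1:ℕ) : ℝ) := by
      apply Real.rpow_le_rpow_of_exponent_le hl.le
      push_cast; linarith
    have h3 : l ^ (y+1:ℝ) = (m:ℝ) * l := by
      rw [Real.rpow_add hl0, hly, Real.rpow_one]
    rw [h1, h3] at h2; linarith
  have hden : (m:ℝ) ≤ l ^ (a₀+1) - 1 := by
    have : 1 ≤ (m:ℝ)*(l-1) := by
      calc (1:ℝ) = (l-1)⁻¹ * (l-1) := by field_simp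
        _ ≤ (m:ℝ) * (l-1) := by nlinarith
    nlinarith
  have hgexp : Real.exp (-(2*(l-1))) ≤ (1 - (l - 1) / (l ^ (a₀ + 1) - 1)) ^ m := by
    have h1 : (l - 1) / (l ^ (a₀+1) - 1) ≤ (l-1)/(m:ℝ) :=
      div_le_div_of_nonneg_left hl1.le hmpos hden
    have h2 : Real.exp (-(2*((l-1)/(m:ℝ)))) ≤ 1 - (l - 1) / (l ^ (a₀+1) - 1) := by
      have := aux_exp_neg_two_le hu0 hu2
      linarith
    have h3 : (Real.exp (-(2*((l-1)/(m:ℝ)))))^m ≤ (1 - (l - 1) / (l ^ (a₀+1) - 1)) ^ m :=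
      pow_le_pow_left₀ (Real.exp_pos _).le h2 m
    have h4 : (Real.exp (-(2*((l-1)/(m:ℝ)))))^m = Real.exp (-(2*(l-1))) := by
      rw [← Real.exp_nat_mul]
      congr 1
      field_simp
    rwa [h4] at h3
  have hqn : ((q:ℝ)^2)⁻¹ * (m:ℝ) ^ (-(Real.log q / Real.log l)) ≤ ((q:ℝ) ^ (a₀+1))⁻¹ := by
    have hqy : (q:ℝ) ^ (y:ℝ) = (m:ℝ) ^ (Real.log q / Real.log l : ℝ) := by
      rw [Real.rpow_def_of_pos hq0, Real.rpow_def_of_pos hmpos]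
      congr 1; ring
    have h1 : (q:ℝ) ^ (a₀+1) ≤ (q:ℝ) ^ (y + 2 : ℝ) := by
      have hc : ((a₀+1:ℕ):ℝ) ≤ y + 2 := by
        have := Nat.ceil_lt_add_one hy0
        push_cast; linarith
      calc (q:ℝ) ^ (a₀+1) = (q:ℝ) ^ ((a₀+1:ℕ):ℝ) := (Real.rpow_natCast _ _).symm
        _ ≤ (q:ℝ) ^ (y+2:ℝ) := Real.rpow_le_rpow_of_exponent_le hq1.le hc
    have h2 : (q:ℝ) ^ (y+2:ℝ) = (m:ℝ) ^ (Real.log q / Real.log l : ℝ) * (q:ℝ)^2 := by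
      rw [Real.rpow_add hq0, hqy]
      norm_num [Real.rpow_natCast]
    have hmα : (0:ℝ) < (m:ℝ) ^ (Real.log q / Real.log l : ℝ) :=
      Real.rpow_pos_of_pos hmpos _
    have h3 : ((q:ℝ) ^ (y+2:ℝ))⁻¹ ≤ ((q:ℝ) ^ (a₀+1))⁻¹ :=
      inv_anti₀ (by positivity) h1
    have h4 : ((q:ℝ) ^ (y+2:ℝ))⁻¹ = ((q:ℝ)^2)⁻¹ * (m:ℝ) ^ (-(Real.log q / Real.log l)) := by
      rw [h2, Real.rpow_neg hmpos.le, mul_inv]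
      ring
    linarith [h3, h4 ▸ h3]
  have hterm : ((q:ℝ)^2)⁻¹ * Real.exp (-(2*(l-1))) * (m:ℝ) ^ (-(Real.log q / Real.log l)) ≤
      ((q : ℝ) ^ (a₀ + 1))⁻¹ * (1 - (l - 1) / (l ^ (a₀ + 1) - 1)) ^ m := by
    calc ((q:ℝ)^2)⁻¹ * Real.exp (-(2*(l-1))) * (m:ℝ) ^ (-(Real.log q / Real.log l))
        = (((q:ℝ)^2)⁻¹ * (m:ℝ) ^ (-(Real.log q / Real.log l))) * Real.exp (-(2*(l-1))) := by
          ring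
      _ ≤ ((q:ℝ) ^ (a₀+1))⁻¹ * Real.exp (-(2*(l-1))) :=
          mul_le_mul_of_nonneg_right hqn (Real.exp_pos _).le
      _ ≤ ((q : ℝ) ^ (a₀ + 1))⁻¹ * (1 - (l - 1) / (l ^ (a₀ + 1) - 1)) ^ m :=
          mul_le_mul_of_nonneg_left hgexp (by positivity)
  refine le_trans hterm ?_
  exact Summable.le_tsum (aux_summable hl q hq m) a₀ (fun b _ =>
    mul_nonneg (by positivity) (pow_nonneg (aux_g_nonneg hl b) m))

private lemma key_upper :
    ∃ C : ℝ, 0 < C ∧ ∃ M : ℕ, ∀ m : ℕ, M ≤ m →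
      (∑' a : ℕ, ((q : ℝ) ^ (a + 1))⁻¹ * (1 - (l - 1) / (l ^ (a + 1) - 1)) ^ m) ≤
        C * (m : ℝ) ^ (-(Real.log q / Real.log l)) := by
  have hl0 : (0:ℝ) < l := by linarith
  have hl1 : (0:ℝ) < l - 1 := by linarith
  have hq1 : (1:ℝ) < q := by exact_mod_cast lt_of_lt_of_le one_lt_two hq
  have hq0 : (0:ℝ) < q := by linarith
  have hq2 : (2:ℝ) ≤ q := by exact_mod_cast hq
  have hloq : 0 < Real.log l := Real.log_pos hl
  set c2 : ℝ := (l-1)/l with hc2def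
  have hc2 : (0:ℝ) < c2 := div_pos hl1 hl0
  set ψ : ℕ → ℝ := fun j : ℕ => (q:ℝ)^j * Real.exp (-(c2 * l^j)) with hψdef
  have hψsum : Summable ψ := by
    have := aux_psi_summable hl hq
    simpa [hψdef, hc2def, mul_comm, mul_assoc, mul_left_comm, neg_mul] using this
  have hψ0 : ∀ j, 0 ≤ ψ j := fun j => by rw [hψdef]; positivity
  set K : ℝ := ∑' j, ψ j with hK
  have hK0 : 0 ≤ K := tsum_nonneg hψ0
  refine ⟨K + 1, by linarith, 2, fun m hm => ?_⟩
  have hm1 : (1:ℝ) ≤ m := by exact_mod_cast le_trans one_le_two hm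
  have hmpos : (0:ℝ) < m := by linarith
  set y : ℝ := Real.log m / Real.log l with hy
  have hy0 : 0 ≤ y := div_nonneg (Real.log_nonneg hm1) hloq.le
  have hly : l ^ (y:ℝ) = (m:ℝ) := by
    rw [Real.rpow_def_of_pos hl0, mul_div_cancel₀ _ (ne_of_gt hloq), Real.exp_log hmpos]
  have hqy : (q:ℝ) ^ (y:ℝ) = (m:ℝ) ^ (Real.log q / Real.log l : ℝ) := by
    rw [Real.rpow_def_of_pos hq0, Real.rpow_def_of_pos hmpos]
    congr 1; ring
  set N : ℕ := ⌈y⌉₊ with hN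
  have hNy : (y:ℝ) ≤ (N:ℝ) := Nat.le_ceil y
  have hNy2 : (N:ℝ) ≤ y + 1 := (Nat.ceil_lt_add_one hy0).le
  have hmα : (0:ℝ) < (m:ℝ) ^ (Real.log q / Real.log l : ℝ) := Real.rpow_pos_of_pos hmpos _
  have hmαneg : (0:ℝ) < (m:ℝ) ^ (-(Real.log q / Real.log l)) := Real.rpow_pos_of_pos hmpos _
  -- q^N ≥ m^α
  have hqN : (m:ℝ) ^ (Real.log q / Real.log l : ℝ) ≤ (q:ℝ)^N := by
    calc (m:ℝ) ^ (Real.log q / Real.log l : ℝ) = (q:ℝ) ^ (y:ℝ) := hqy.symm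
      _ ≤ (q:ℝ) ^ ((N:ℕ):ℝ) := Real.rpow_le_rpow_of_exponent_le hq1.le hNy
      _ = (q:ℝ)^N := Real.rpow_natCast _ _
  have hqNinv : ((q:ℝ)^N)⁻¹ ≤ (m:ℝ) ^ (-(Real.log q / Real.log l)) := by
    rw [Real.rpow_neg hmpos.le]
    exact inv_anti₀ hmα hqN
  -- l^N ≤ l*m
  have hlN : (l:ℝ)^N ≤ l * (m:ℝ) := by
    calc (l:ℝ)^N = l ^ ((N:ℕ):ℝ) := (Real.rpow_natCast _ _).symm
      _ ≤ l ^ (y+1:ℝ) := Real.rpow_le_rpow_of_exponent_le hl.le hNy2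
      _ = (m:ℝ) * l := by rw [Real.rpow_add hl0, hly, Real.rpow_one]
      _ = l * (m:ℝ) := mul_comm _ _
  have hfs := aux_summable hl q hq m
  rw [← hfs.sum_add_tsum_nat_add N]
  -- tail bound
  have htail : (∑' a : ℕ, ((q : ℝ) ^ (a + N + 1))⁻¹ * (1 - (l - 1) / (l ^ (a + N + 1) - 1)) ^ m)
      ≤ (m:ℝ) ^ (-(Real.log q / Real.log l)) := by
    have hb : ∀ a : ℕ, ((q : ℝ) ^ (a + N + 1))⁻¹ * (1 - (l - 1) / (l ^ (a + N + 1) - 1)) ^ m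
        ≤ ((q:ℝ)⁻¹)^(N+1) * ((q:ℝ)⁻¹)^a := by
      intro a
      have h1 : (1 - (l - 1) / (l ^ (a + N + 1) - 1)) ^ m ≤ 1 := by
        have := aux_g_nonneg hl (a + N)
        have h2 := aux_g_le_one hl (a + N)
        exact pow_le_one₀ this h2
      calc ((q : ℝ) ^ (a + N + 1))⁻¹ * (1 - (l - 1) / (l ^ (a + N + 1) - 1)) ^ m
          ≤ ((q : ℝ) ^ (a + N + 1))⁻¹ * 1 := mul_le_mul_of_nonneg_left h1 (by positivity)
        _ = ((q:ℝ)⁻¹)^(N+1) * ((q:ℝ)⁻¹)^a := by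
            rw [mul_one, ← inv_pow, ← pow_add]
            congr 1
            omega
    have hsum2 : Summable (fun a : ℕ => ((q:ℝ)⁻¹)^(N+1) * ((q:ℝ)⁻¹)^a) :=
      (summable_geometric_of_lt_one (by positivity)
        (by rw [inv_lt_one_iff₀]; right; exact hq1)).mul_left _
    have hsum1 : Summable (fun a : ℕ =>
        ((q : ℝ) ^ (a + N + 1))⁻¹ * (1 - (l - 1) / (l ^ (a + N + 1) - 1)) ^ m) := by
      have := (summable_nat_add_iff N).2 hfs
      exact this.congr (fun a => by norm_num)
    calc (∑' a : ℕ, ((q : ℝ) ^ (a + N + 1))⁻¹ * (1 - (l - 1) / (l ^ (a + N + 1) - 1)) ^ m)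
        ≤ ∑' a : ℕ, ((q:ℝ)⁻¹)^(N+1) * ((q:ℝ)⁻¹)^a := Summable.tsum_le_tsum hb hsum1 hsum2
      _ = ((q:ℝ)⁻¹)^(N+1) * (1 - (q:ℝ)⁻¹)⁻¹ := by
          rw [tsum_mul_left, tsum_geometric_of_lt_one (by positivity)
            (by rw [inv_lt_one_iff₀]; right; exact hq1)]
      _ ≤ ((q:ℝ)⁻¹)^N := by
          have hqi : (q:ℝ)⁻¹ ≤ 1/2 := by
            rw [inv_eq_one_div]
            exact one_div_le_one_div_of_le (by norm_num) hq2
          have hqipos : (0:ℝ) < (q:ℝ)⁻¹ := by positivity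
          have h5 : (1 - (q:ℝ)⁻¹)⁻¹ ≤ 2 := by
            rw [← one_div]
            calc (1:ℝ)/(1 - (q:ℝ)⁻¹) ≤ 1/(1/2) := by
                  apply one_div_le_one_div_of_le <;> linarith
              _ = 2 := by norm_num
          calc ((q:ℝ)⁻¹)^(N+1) * (1 - (q:ℝ)⁻¹)⁻¹ = ((q:ℝ)⁻¹)^N * ((q:ℝ)⁻¹ * (1 - (q:ℝ)⁻¹)⁻¹) := by
                rw [pow_succ]; ring
            _ ≤ ((q:ℝ)⁻¹)^N * ((1/2) * 2) := by
                apply mul_le_mul_of_nonneg_left _ (by positivity)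
                exact mul_le_mul hqi h5 (inv_nonneg.mpr (by linarith)) (by norm_num)
            _ = ((q:ℝ)⁻¹)^N := by ring
      _ = ((q:ℝ)^N)⁻¹ := by rw [inv_pow]
      _ ≤ (m:ℝ) ^ (-(Real.log q / Real.log l)) := hqNinv
  -- head bound
  have hhead : (∑ a ∈ Finset.range N,
      ((q : ℝ) ^ (a + 1))⁻¹ * (1 - (l - 1) / (l ^ (a + 1) - 1)) ^ m)
      ≤ K * (m:ℝ) ^ (-(Real.log q / Real.log l)) := by
    have hb : ∀ a ∈ Finset.range N,
        ((q : ℝ) ^ (a + 1))⁻¹ * (1 - (l - 1) / (l ^ (a + 1) - 1)) ^ m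
        ≤ (m:ℝ) ^ (-(Real.log q / Real.log l)) * ψ (N - 1 - a) := by
      intro a ha
      rw [Finset.mem_range] at ha
      set j : ℕ := N - 1 - a with hj
      have hjsum : j + (a + 1) = N := by omega
      -- bound on the exponential part
      have hgb : (1 - (l - 1) / (l ^ (a + 1) - 1)) ^ m ≤ Real.exp (-(c2 * l^j)) := by
        have h1 : (1 - (l - 1) / (l ^ (a+1) - 1)) ^ m ≤
            (Real.exp (-((l-1) / l ^ (a+1))))^m :=
          pow_le_pow_left₀ (aux_g_nonneg hl a) (aux_g_le_exp hl a) m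
        have h2 : (Real.exp (-((l-1) / l ^ (a+1))))^m =
            Real.exp (-((m:ℝ)*(l-1) / l ^ (a+1))) := by
          rw [← Real.exp_nat_mul]
          congr 1
          field_simp
        have h3 : c2 * l^j ≤ (m:ℝ)*(l-1) / l ^ (a+1) := by
          have hpowpos : (0:ℝ) < l ^ (a+1) := by positivity
          have hsplit : (l:ℝ)^j * l^(a+1) = l^N := by rw [← pow_add, hjsum]
          rw [hc2def, div_mul_eq_mul_div, div_le_div_iff₀ hl0 hpowpos]
          nlinarith [pow_pos hl0 j]
        have h4 : Real.exp (-((m:ℝ)*(l-1) / l ^ (a+1))) ≤ Real.exp (-(c2 * l^j)) :=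
          Real.exp_le_exp.mpr (by linarith)
        calc (1 - (l - 1) / (l ^ (a + 1) - 1)) ^ m ≤ (Real.exp (-((l-1) / l ^ (a+1))))^m := h1
          _ = Real.exp (-((m:ℝ)*(l-1) / l ^ (a+1))) := h2
          _ ≤ Real.exp (-(c2 * l^j)) := h4
      -- bound on the q part
      have hqb : ((q:ℝ) ^ (a+1))⁻¹ ≤ (q:ℝ)^j * (m:ℝ) ^ (-(Real.log q / Real.log l)) := by
        have hsplit : (q:ℝ)^N = (q:ℝ)^j * (q:ℝ)^(a+1) := by rw [← pow_add, hjsum]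
        have h1 : ((q:ℝ) ^ (a+1))⁻¹ = (q:ℝ)^j * ((q:ℝ)^N)⁻¹ := by
          rw [hsplit, mul_inv]
          field_simp
        rw [h1]
        exact mul_le_mul_of_nonneg_left hqNinv (by positivity)
      calc ((q : ℝ) ^ (a + 1))⁻¹ * (1 - (l - 1) / (l ^ (a + 1) - 1)) ^ m
          ≤ ((q:ℝ)^j * (m:ℝ) ^ (-(Real.log q / Real.log l))) * Real.exp (-(c2 * l^j)) := by
            apply mul_le_mul hqb hgb (pow_nonneg (aux_g_nonneg hl a) m) (by positivity)
        _ = (m:ℝ) ^ (-(Real.log q / Real.log l)) * ψ j := by rw [hψdef]; ring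
    calc (∑ a ∈ Finset.range N,
        ((q : ℝ) ^ (a + 1))⁻¹ * (1 - (l - 1) / (l ^ (a + 1) - 1)) ^ m)
        ≤ ∑ a ∈ Finset.range N, (m:ℝ) ^ (-(Real.log q / Real.log l)) * ψ (N - 1 - a) :=
          Finset.sum_le_sum hb
      _ = (m:ℝ) ^ (-(Real.log q / Real.log l)) * ∑ a ∈ Finset.range N, ψ (N - 1 - a) := by
          rw [Finset.mul_sum]
      _ = (m:ℝ) ^ (-(Real.log q / Real.log l)) * ∑ j ∈ Finset.range N, ψ j := by
          rw [Finset.sum_range_reflect]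
      _ ≤ (m:ℝ) ^ (-(Real.log q / Real.log l)) * K := by
          apply mul_le_mul_of_nonneg_left _ hmαneg.le
          exact Summable.sum_le_tsum _ (fun i _ => hψ0 i) hψsum
      _ = K * (m:ℝ) ^ (-(Real.log q / Real.log l)) := mul_comm _ _
  calc (∑ a ∈ Finset.range N, ((q : ℝ) ^ (a + 1))⁻¹ * (1 - (l - 1) / (l ^ (a + 1) - 1)) ^ m)
      + (∑' a : ℕ, ((q : ℝ) ^ (a + N + 1))⁻¹ * (1 - (l - 1) / (l ^ (a + N + 1) - 1)) ^ m)
      ≤ K * (m:ℝ) ^ (-(Real.log q / Real.log l)) + (m:ℝ) ^ (-(Real.log q / Real.log l)) := by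
        have := add_le_add hhead htail
        convert this using 3 <;> norm_num
    _ = (K + 1) * (m:ℝ) ^ (-(Real.log q / Real.log l)) := by ring

end bounds

/-- For `λ > 1`, integer `q ≥ 2` and `α = log q / log λ`, there are constants `0 < c ≤ C` such
that for all sufficiently large `m`,
`c·m^{-α} ≤ ∑_{a≥1} q^{-a} (1-(λ-1)/(λ^a-1))^m ≤ C·m^{-α}`. -/
theorem stmt_4 (l : ℝ) (hl : 1 < l) (q : ℕ) (hq : 2 ≤ q) :
    ∃ c C : ℝ, 0 < c ∧ c ≤ C ∧ ∃ M : ℕ, ∀ m : ℕ, M ≤ m →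
      c * (m : ℝ) ^ (-(Real.log q / Real.log l)) ≤
          (∑' a : ℕ, ((q : ℝ) ^ (a + 1))⁻¹ * (1 - (l - 1) / (l ^ (a + 1) - 1)) ^ m) ∧
        (∑' a : ℕ, ((q : ℝ) ^ (a + 1))⁻¹ * (1 - (l - 1) / (l ^ (a + 1) - 1)) ^ m) ≤
          C * (m : ℝ) ^ (-(Real.log q / Real.log l)) := by
  obtain ⟨c, hc, M₁, h₁⟩ := key_lower hl hq
  obtain ⟨C, hC, M₂, h₂⟩ := key_upper hl hq
  refine ⟨min c C, max c C, lt_min hc hC, le_trans (min_le_left _ _) (le_max_left _ _),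
    max M₁ M₂, fun m hm => ?_⟩
  have hmpos : (0:ℝ) ≤ (m:ℝ) ^ (-(Real.log q / Real.log l)) := by
    positivity
  constructor
  · exact le_trans (mul_le_mul_of_nonneg_right (min_le_left _ _) hmpos)
      (h₁ m (le_trans (le_max_left _ _) hm))
  · exact le_trans (h₂ m (le_trans (le_max_right _ _) hm))
      (mul_le_mul_of_nonneg_right (le_max_right _ _) hmpos)
end

section
/- Let λ > 1, q ≥ 2 an integer, α = log q / log λ, and m ≥ 1 an integer. Then ∑_{a=1}^∞ q^{-a} (1 - (λ-1)/(λ^a - 1))^m ≤ C·m^{-α} for a constant C depending only on q and λ. (Upper bound half of the asymptotic estimate.) -/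
open Real Finset

private lemma aux_exp_le (k : ℕ) {x : ℝ} (hx : 0 < x) :
    Real.exp (-x) ≤ (k.factorial : ℝ) / x ^ k := by
  have h1 : x ^ k / (k.factorial : ℝ) ≤ Real.exp x := by
    calc x ^ k / (k.factorial : ℝ)
        ≤ ∑ i ∈ range (k + 1), x ^ i / i.factorial := by
          refine Finset.single_le_sum (f := fun i => x ^ i / (i.factorial : ℝ)) ?_ ?_
          · intro i _; positivity
          · simp
      _ ≤ Real.exp x := Real.sum_le_exp_of_nonneg hx.le _
  have hpos : 0 < x ^ k / (k.factorial : ℝ) := by positivity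
  rw [Real.exp_neg]
  calc (Real.exp x)⁻¹ ≤ (x ^ k / (k.factorial : ℝ))⁻¹ := by
        exact inv_anti₀ hpos h1
    _ = (k.factorial : ℝ) / x ^ k := by rw [inv_div]

private lemma aux_base (l : ℝ) (hl : 1 < l) {b : ℕ} (hb : b ≠ 0) :
    0 ≤ 1 - (l - 1) / (l ^ b - 1) ∧
      1 - (l - 1) / (l ^ b - 1) ≤ Real.exp (-((l - 1) / l ^ b)) := by
  have hl0 : (0:ℝ) < l := by linarith
  have h1 : 1 < l ^ b := one_lt_pow₀ hl hb
  have hpos : 0 < l ^ b - 1 := sub_pos.2 h1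
  have hself : l ≤ l ^ b := le_self_pow₀ hl.le hb
  constructor
  · have : (l - 1) / (l ^ b - 1) ≤ 1 := by
      rw [div_le_one hpos]; linarith
    linarith
  · have h2 : (l - 1) / l ^ b ≤ (l - 1) / (l ^ b - 1) := by
      gcongr
      · linarith
    have h3 := Real.add_one_le_exp (-((l - 1) / l ^ b))
    linarith

/-- Upper bound: for `λ > 1`, integer `q ≥ 2`, `α = log q / log λ`, and every `m ≥ 1`,
`∑_{a≥1} q^{-a} (1-(λ-1)/(λ^a-1))^m ≤ C·m^{-α}` for a constant `C = C(q,λ)`. -/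
theorem stmt_5 (l : ℝ) (hl : 1 < l) (q : ℕ) (hq : 2 ≤ q) :
    ∃ C : ℝ, 0 < C ∧ ∀ m : ℕ, 1 ≤ m →
      (∑' a : ℕ, ((q : ℝ) ^ (a + 1))⁻¹ * (1 - (l - 1) / (l ^ (a + 1) - 1)) ^ m) ≤
        C * (m : ℝ) ^ (-(Real.log q / Real.log l)) := by
  have hl0 : (0:ℝ) < l := by linarith
  have hc : (0:ℝ) < l - 1 := by linarith
  have hq1 : (1:ℝ) < q := by exact_mod_cast lt_of_lt_of_le one_lt_two hq
  have hq0 : (0:ℝ) < q := by linarith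
  obtain ⟨k, hk⟩ : ∃ k : ℕ, (q:ℝ) < l ^ k := pow_unbounded_of_one_lt _ hl
  set r : ℝ := l ^ k / q with hr
  have hr1 : 1 < r := (one_lt_div hq0).2 hk
  have hr0 : 0 < r := by linarith
  set Kh : ℝ := (k.factorial : ℝ) * ((l - 1)⁻¹) ^ k * (r * l ^ k / (r - 1)) with hKh
  have hKh0 : 0 < Kh := by
    have : 0 < r - 1 := by linarith
    positivity
  refine ⟨Kh + 1, by linarith, ?_⟩
  intro m hm
  have hm0 : (0:ℝ) < m := by exact_mod_cast Nat.lt_of_lt_of_le Nat.zero_lt_one hm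
  have hm1 : (1:ℝ) ≤ m := by exact_mod_cast hm
  have hlogl : 0 < Real.log l := Real.log_pos hl
  have hlq : 0 < Real.log q := Real.log_pos hq1
  set x : ℝ := Real.log m / Real.log l with hxdef
  have hx0 : 0 ≤ x := div_nonneg (Real.log_nonneg hm1) hlogl.le
  set a₀ : ℕ := ⌊x⌋₊ + 1 with ha₀
  -- basic facts about a₀
  have hA : l ^ (⌊x⌋₊) ≤ (m:ℝ) := by
    have h1 : (⌊x⌋₊ : ℝ) * Real.log l ≤ Real.log m := by
      calc (⌊x⌋₊ : ℝ) * Real.log l ≤ x * Real.log l :=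
            mul_le_mul_of_nonneg_right (Nat.floor_le hx0) hlogl.le
        _ = Real.log m := div_mul_cancel₀ _ hlogl.ne'
    calc l ^ ⌊x⌋₊ = Real.exp ((⌊x⌋₊ : ℝ) * Real.log l) := by
          rw [Real.exp_nat_mul, Real.exp_log hl0]
      _ ≤ Real.exp (Real.log m) := Real.exp_le_exp.2 h1
      _ = m := Real.exp_log hm0
  have hB : ((q:ℝ) ^ a₀)⁻¹ ≤ (m:ℝ) ^ (-(Real.log q / Real.log l)) := by
    rw [Real.rpow_def_of_pos hm0]
    have h1 : ((q:ℝ) ^ a₀)⁻¹ = Real.exp (-((a₀:ℝ) * Real.log q)) := by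
      rw [Real.exp_neg, Real.exp_nat_mul, Real.exp_log hq0]
    rw [h1, Real.exp_le_exp]
    have hxlt : x < (a₀ : ℝ) := by
      have := Nat.lt_floor_add_one x
      push_cast [ha₀]
      linarith
    have h2 : x * Real.log q ≤ (a₀:ℝ) * Real.log q :=
      mul_le_mul_of_nonneg_right hxlt.le hlq.le
    have h3 : Real.log m * -(Real.log q / Real.log l) = -(x * Real.log q) := by
      rw [hxdef]; ring
    rw [h3]
    linarith
  -- the comparison function
  set g : ℕ → ℝ := fun a => ((q:ℝ) ^ (a + 1))⁻¹ *
      Real.exp (-((m:ℝ) * (l - 1) / l ^ (a + 1))) with hg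
  have hfg : ∀ a : ℕ, ((q : ℝ) ^ (a + 1))⁻¹ * (1 - (l - 1) / (l ^ (a + 1) - 1)) ^ m ≤ g a := by
    intro a
    obtain ⟨h0, h1⟩ := aux_base l hl (b := a + 1) (Nat.succ_ne_zero a)
    have hpow : (1 - (l - 1) / (l ^ (a + 1) - 1)) ^ m ≤
        Real.exp (-((m:ℝ) * (l - 1) / l ^ (a + 1))) := by
      calc (1 - (l - 1) / (l ^ (a + 1) - 1)) ^ m
          ≤ (Real.exp (-((l - 1) / l ^ (a + 1)))) ^ m := pow_le_pow_left₀ h0 h1 m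
        _ = Real.exp (-((m:ℝ) * (l - 1) / l ^ (a + 1))) := by
            rw [← Real.exp_nat_mul]; congr 1; ring
    exact mul_le_mul_of_nonneg_left hpow (by positivity)
  have hf_nonneg : ∀ a : ℕ,
      0 ≤ ((q : ℝ) ^ (a + 1))⁻¹ * (1 - (l - 1) / (l ^ (a + 1) - 1)) ^ m := by
    intro a
    obtain ⟨h0, _⟩ := aux_base l hl (b := a + 1) (Nat.succ_ne_zero a)
    have := pow_nonneg h0 m
    positivity
  have hg_nonneg : ∀ a : ℕ, 0 ≤ g a := by intro a; rw [hg]; positivity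
  have hqi0 : (0:ℝ) ≤ (q:ℝ)⁻¹ := by positivity
  have hqi1 : (q:ℝ)⁻¹ < 1 := inv_lt_one_of_one_lt₀ hq1
  have hgeo : Summable (fun a : ℕ => ((q:ℝ)⁻¹) ^ (a + 1)) := by
    simpa [pow_succ] using (summable_geometric_of_lt_one hqi0 hqi1).mul_right (q:ℝ)⁻¹
  have hg_le_geo : ∀ a : ℕ, g a ≤ ((q:ℝ)⁻¹) ^ (a + 1) := by
    intro a
    have hexp : Real.exp (-((m:ℝ) * (l - 1) / l ^ (a + 1))) ≤ 1 := by
      rw [Real.exp_le_one_iff]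
      have : 0 ≤ (m:ℝ) * (l - 1) / l ^ (a + 1) := by positivity
      linarith
    calc g a ≤ ((q:ℝ) ^ (a + 1))⁻¹ * 1 :=
          mul_le_mul_of_nonneg_left hexp (by positivity)
      _ = ((q:ℝ)⁻¹) ^ (a + 1) := by rw [mul_one, inv_pow]
  have hsg : Summable g := Summable.of_nonneg_of_le hg_nonneg hg_le_geo hgeo
  have hsf : Summable (fun a : ℕ =>
      ((q : ℝ) ^ (a + 1))⁻¹ * (1 - (l - 1) / (l ^ (a + 1) - 1)) ^ m) :=
    Summable.of_nonneg_of_le hf_nonneg hfg hsg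
  have hmain : (∑' a : ℕ, ((q : ℝ) ^ (a + 1))⁻¹ * (1 - (l - 1) / (l ^ (a + 1) - 1)) ^ m)
      ≤ ∑' a, g a := Summable.tsum_le_tsum hfg hsf hsg
  -- split the sum at a₀
  have hsplit : (∑ a ∈ range a₀, g a) + (∑' a : ℕ, g (a + a₀)) = ∑' a, g a :=
    Summable.sum_add_tsum_nat_add a₀ hsg
  -- head bound
  have hterm : ∀ a : ℕ, g a ≤
      (k.factorial : ℝ) * (((m:ℝ) * (l - 1))⁻¹) ^ k * r ^ (a + 1) := by
    intro a
    have hx : 0 < (m:ℝ) * (l - 1) / l ^ (a + 1) := by positivity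
    have h := aux_exp_le k hx
    calc g a ≤ ((q:ℝ) ^ (a + 1))⁻¹ *
          ((k.factorial : ℝ) / ((m:ℝ) * (l - 1) / l ^ (a + 1)) ^ k) :=
        mul_le_mul_of_nonneg_left h (by positivity)
      _ = (k.factorial : ℝ) * (((m:ℝ) * (l - 1))⁻¹) ^ k * r ^ (a + 1) := by
          rw [hr]
          have h1 : ((q:ℝ) ^ (a + 1)) ≠ 0 := by positivity
          have h2 : ((m:ℝ) * (l - 1)) ≠ 0 := by positivity
          have h3 : (l : ℝ) ≠ 0 := by positivity
          simp only [div_eq_mul_inv, mul_pow, inv_pow, mul_inv, inv_inv, ← pow_mul]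
          ring
  have hkey : (((m:ℝ)⁻¹)) ^ k * r ^ a₀ ≤ l ^ k * ((q:ℝ) ^ a₀)⁻¹ := by
    have hla : l ^ a₀ ≤ l * m := by
      calc l ^ a₀ = l * l ^ ⌊x⌋₊ := by rw [ha₀, pow_succ']
        _ ≤ l * m := mul_le_mul_of_nonneg_left hA hl0.le
    have h1 : (m:ℝ)⁻¹ * l ^ a₀ ≤ l := by
      calc (m:ℝ)⁻¹ * l ^ a₀ ≤ (m:ℝ)⁻¹ * (l * m) :=
            mul_le_mul_of_nonneg_left hla (by positivity)
        _ = l := by field_simp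
    calc ((m:ℝ)⁻¹) ^ k * r ^ a₀ = ((m:ℝ)⁻¹ * l ^ a₀) ^ k * ((q:ℝ) ^ a₀)⁻¹ := by
          rw [hr, div_pow, mul_pow, ← pow_mul, ← pow_mul, Nat.mul_comm]
          ring
      _ ≤ l ^ k * ((q:ℝ) ^ a₀)⁻¹ := by
          gcongr
  have hhead : (∑ a ∈ range a₀, g a) ≤ Kh * ((q:ℝ) ^ a₀)⁻¹ := by
    have hrm1 : (0:ℝ) < r - 1 := by linarith
    calc (∑ a ∈ range a₀, g a)
        ≤ ∑ a ∈ range a₀, (k.factorial : ℝ) * (((m:ℝ) * (l - 1))⁻¹) ^ k * r ^ (a + 1) :=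
          Finset.sum_le_sum fun a _ => hterm a
      _ = (k.factorial : ℝ) * (((m:ℝ) * (l - 1))⁻¹) ^ k *
            (r * ((r ^ a₀ - 1) / (r - 1))) := by
          simp_rw [pow_succ', ← Finset.mul_sum, geom_sum_eq hr1.ne']
      _ ≤ (k.factorial : ℝ) * (((m:ℝ) * (l - 1))⁻¹) ^ k * (r * (r ^ a₀ / (r - 1))) := by
          have h5 : r ^ a₀ - 1 ≤ r ^ a₀ := by linarith
          gcongr
      _ = (k.factorial : ℝ) * ((l - 1)⁻¹) ^ k * (r / (r - 1)) *
            (((m:ℝ)⁻¹) ^ k * r ^ a₀) := by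
          rw [mul_inv, mul_pow]; ring
      _ ≤ (k.factorial : ℝ) * ((l - 1)⁻¹) ^ k * (r / (r - 1)) *
            (l ^ k * ((q:ℝ) ^ a₀)⁻¹) := by
          gcongr
      _ = Kh * ((q:ℝ) ^ a₀)⁻¹ := by rw [hKh]; ring
  -- tail bound
  have htail : (∑' a : ℕ, g (a + a₀)) ≤ ((q:ℝ) ^ a₀)⁻¹ := by
    have hs1 : Summable fun a : ℕ => g (a + a₀) := (summable_nat_add_iff a₀).2 hsg
    have hs2 : Summable fun a : ℕ => ((q:ℝ)⁻¹) ^ (a₀ + 1) * ((q:ℝ)⁻¹) ^ a :=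
      (summable_geometric_of_lt_one hqi0 hqi1).mul_left _
    have h1 : (∑' a : ℕ, g (a + a₀)) ≤
        ∑' a : ℕ, ((q:ℝ)⁻¹) ^ (a₀ + 1) * ((q:ℝ)⁻¹) ^ a := by
      refine Summable.tsum_le_tsum (fun a => ?_) hs1 hs2
      calc g (a + a₀) ≤ ((q:ℝ)⁻¹) ^ (a + a₀ + 1) := hg_le_geo _
        _ = ((q:ℝ)⁻¹) ^ (a₀ + 1) * ((q:ℝ)⁻¹) ^ a := by
            rw [← pow_add]; ring_nf
    rw [tsum_mul_left, tsum_geometric_of_lt_one hqi0 hqi1] at h1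
    refine h1.trans ?_
    have hne1 : (1:ℝ) - (q:ℝ)⁻¹ ≠ 0 := by
      have : (q:ℝ)⁻¹ < 1 := hqi1
      linarith
    have h2 : ((q:ℝ)⁻¹) ^ (a₀ + 1) * (1 - (q:ℝ)⁻¹)⁻¹ =
        ((q:ℝ) ^ a₀)⁻¹ * ((q:ℝ) - 1)⁻¹ := by
      have hqne : (q:ℝ) ≠ 0 := hq0.ne'
      have hq1ne : (q:ℝ) - 1 ≠ 0 := by linarith
      rw [inv_pow]
      field_simp
      ring
    rw [h2]
    have h3 : ((q:ℝ) - 1)⁻¹ ≤ 1 := by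
      have hq2 : (2:ℝ) ≤ (q:ℝ) := by exact_mod_cast hq
      have h4 : (1:ℝ) ≤ (q:ℝ) - 1 := by linarith
      calc ((q:ℝ) - 1)⁻¹ ≤ (1:ℝ)⁻¹ := inv_anti₀ one_pos h4
        _ = 1 := inv_one
    calc ((q:ℝ) ^ a₀)⁻¹ * ((q:ℝ) - 1)⁻¹ ≤ ((q:ℝ) ^ a₀)⁻¹ * 1 :=
          mul_le_mul_of_nonneg_left h3 (by positivity)
      _ = ((q:ℝ) ^ a₀)⁻¹ := mul_one _
  -- combine
  calc (∑' a : ℕ, ((q : ℝ) ^ (a + 1))⁻¹ * (1 - (l - 1) / (l ^ (a + 1) - 1)) ^ m)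
      ≤ ∑' a, g a := hmain
    _ = (∑ a ∈ range a₀, g a) + (∑' a : ℕ, g (a + a₀)) := hsplit.symm
    _ ≤ Kh * ((q:ℝ) ^ a₀)⁻¹ + ((q:ℝ) ^ a₀)⁻¹ := add_le_add hhead htail
    _ = (Kh + 1) * ((q:ℝ) ^ a₀)⁻¹ := by ring
    _ ≤ (Kh + 1) * (m:ℝ) ^ (-(Real.log q / Real.log l)) := by
        exact mul_le_mul_of_nonneg_left hB (by linarith)
end

section
/- Let λ > 1, q ≥ 2 an integer, and α = log q / log λ. Then there is a constant c > 0 (depending on q, λ) such that for all m ≥ 2(αλ/(λ-1))², ∑_{a=1}^∞ q^{-a} (1 - (λ-1)/(λ^a - 1))^m ≥ c·m^{-α}. (Lower bound half of the asymptotic estimate.) -/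
open Real

/-- Lower bound: for `λ > 1`, integer `q ≥ 2`, `α = log q / log λ`, there is `c > 0` such that
for all `m ≥ 2(αλ/(λ-1))²`,
`c·m^{-α} ≤ ∑_{a≥1} q^{-a} (1-(λ-1)/(λ^a-1))^m`. -/
theorem stmt_6 (l : ℝ) (hl : 1 < l) (q : ℕ) (hq : 2 ≤ q) :
    ∃ c : ℝ, 0 < c ∧ ∀ m : ℕ,
      2 * ((Real.log q / Real.log l) * l / (l - 1)) ^ 2 ≤ (m : ℝ) →
      c * (m : ℝ) ^ (-(Real.log q / Real.log l)) ≤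
        ∑' a : ℕ, ((q : ℝ) ^ (a + 1))⁻¹ * (1 - (l - 1) / (l ^ (a + 1) - 1)) ^ m := by
  set α := Real.log q / Real.log l with hα
  have hl0 : (0:ℝ) < l := lt_trans one_pos hl
  have hlog : 0 < Real.log l := Real.log_pos hl
  have hq1 : (1:ℝ) < q := by exact_mod_cast Nat.lt_of_lt_of_le one_lt_two hq
  have hq0 : (0:ℝ) < q := lt_trans one_pos hq1
  have hαpos : 0 < α := div_pos (Real.log_pos hq1) hlog
  set K : ℝ := l * (2*l - 1) with hK
  have hK0 : 0 < K := by nlinarith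
  refine ⟨(1/2) * K ^ (-α), by positivity, ?_⟩
  intro m hm
  have hl1 : (0:ℝ) < l - 1 := by linarith
  have hm1 : (1:ℝ) ≤ (m:ℝ) := by
    have h2 : (0:ℝ) < 2 * (α * l / (l - 1)) ^ 2 := by positivity
    have h3 : (0:ℝ) < (m:ℝ) := lt_of_lt_of_le h2 hm
    exact_mod_cast Nat.one_le_cast.mpr (Nat.cast_pos.mp h3)
  have hm0 : (0:ℝ) < (m:ℝ) := by linarith
  -- summability and nonnegativity
  have hterm_nonneg : ∀ a : ℕ, 0 ≤ ((q : ℝ) ^ (a + 1))⁻¹ * (1 - (l - 1) / (l ^ (a + 1) - 1)) ^ m := by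
    intro a
    have hpow : l ≤ l ^ (a + 1) := le_self_pow₀ hl.le (Nat.succ_ne_zero a)
    have h1 : (l - 1) / (l ^ (a + 1) - 1) ≤ 1 := by
      rw [div_le_one (by linarith)]; linarith
    exact mul_nonneg (by positivity) (pow_nonneg (by linarith) m)
  have hterm_le : ∀ a : ℕ, ((q : ℝ) ^ (a + 1))⁻¹ * (1 - (l - 1) / (l ^ (a + 1) - 1)) ^ m
      ≤ ((q : ℝ)⁻¹) ^ (a + 1) := by
    intro a
    have hpow : l ≤ l ^ (a + 1) := le_self_pow₀ hl.le (Nat.succ_ne_zero a)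
    have h1 : (l - 1) / (l ^ (a + 1) - 1) ≤ 1 := by
      rw [div_le_one (by linarith)]; linarith
    have h2 : 0 ≤ (l - 1) / (l ^ (a + 1) - 1) := div_nonneg (by linarith) (by linarith)
    have h3 : (1 - (l - 1) / (l ^ (a + 1) - 1)) ^ m ≤ 1 :=
      pow_le_one₀ (by linarith) (by linarith)
    calc ((q : ℝ) ^ (a + 1))⁻¹ * (1 - (l - 1) / (l ^ (a + 1) - 1)) ^ m
        ≤ ((q : ℝ) ^ (a + 1))⁻¹ * 1 := by
          apply mul_le_mul_of_nonneg_left h3 (by positivity)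
      _ = ((q : ℝ)⁻¹) ^ (a + 1) := by rw [mul_one, inv_pow]
  have hsum : Summable (fun a : ℕ =>
      ((q : ℝ) ^ (a + 1))⁻¹ * (1 - (l - 1) / (l ^ (a + 1) - 1)) ^ m) := by
    apply Summable.of_nonneg_of_le hterm_nonneg hterm_le
    have : Summable (fun a : ℕ => ((q:ℝ)⁻¹) ^ a) :=
      summable_geometric_of_lt_one (by positivity) (by rw [inv_lt_one_iff₀]; right; exact hq1)
    simpa [pow_succ, mul_comm] using this.mul_right (q:ℝ)⁻¹
  -- choose n
  set T : ℝ := 2 * (m:ℝ) * (l - 1) + 1 with hT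
  have hT1 : (1:ℝ) ≤ T := by nlinarith
  set n : ℕ := max 1 ⌈Real.logb l T⌉₊ with hn
  have hn1 : 1 ≤ n := le_max_left _ _
  -- lower bound  T ≤ l ^ n
  have hTn : T ≤ l ^ n := by
    have h1 : Real.logb l T ≤ (⌈Real.logb l T⌉₊ : ℝ) := Nat.le_ceil _
    have h2 : (⌈Real.logb l T⌉₊ : ℝ) ≤ (n : ℝ) := by
      exact_mod_cast le_max_right 1 ⌈Real.logb l T⌉₊
    have h3 : l ^ Real.logb l T ≤ l ^ (n:ℝ) :=
      Real.rpow_le_rpow_of_exponent_le hl.le (h1.trans h2)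
    rwa [Real.rpow_logb hl0 hl.ne' (by linarith), Real.rpow_natCast] at h3
  have hln1 : (1:ℝ) < l ^ n := lt_of_lt_of_le (by nlinarith [mul_pos hm0 hl1]) hTn
  -- upper bound  l ^ n ≤ K * m
  have hnK : l ^ n ≤ K * m := by
    have hlT : l ^ n ≤ l * T := by
      rcases Nat.lt_or_ge ⌈Real.logb l T⌉₊ 2 with hc | hc
      · have : n = 1 := by omega
        rw [this, pow_one]
        nlinarith [mul_le_mul_of_nonneg_left hT1 hl0.le]
      · have hne : n = ⌈Real.logb l T⌉₊ := by omega
        have hlt : ((⌈Real.logb l T⌉₊ - 1 : ℕ) : ℝ) < Real.logb l T := by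
          exact_mod_cast Nat.lt_ceil.mp (by omega)
        have h4 : l ^ ((⌈Real.logb l T⌉₊ - 1 : ℕ) : ℝ) < l ^ Real.logb l T :=
          Real.rpow_lt_rpow_of_exponent_lt hl hlt
        rw [Real.rpow_logb hl0 hl.ne' (by linarith), Real.rpow_natCast] at h4
        have h5 : l ^ n = l * l ^ (⌈Real.logb l T⌉₊ - 1 : ℕ) := by
          rw [hne, ← pow_succ']
          congr 1
          omega
        rw [h5]
        nlinarith [pow_pos hl0 (⌈Real.logb l T⌉₊ - 1 : ℕ)]
    calc l ^ n ≤ l * T := hlT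
      _ ≤ K * m := by rw [hK, hT]; nlinarith
  -- the chosen term
  set x : ℝ := (l - 1) / (l ^ n - 1) with hx
  have hx0 : 0 ≤ x := by
    apply div_nonneg (by linarith); linarith
  have hxm : x ≤ 1 / (2 * m) := by
    rw [hx, div_le_div_iff₀ (by linarith) (by positivity)]
    nlinarith
  have hbern : (1:ℝ) / 2 ≤ (1 - x) ^ m := by
    have hx2 : x ≤ 2 := by
      have h2m : (1:ℝ)/(2*(m:ℝ)) ≤ 1/2 := by
        apply one_div_le_one_div_of_le (by norm_num) (by linarith)
      linarith
    have h1 : (1:ℝ) + (m:ℝ) * (-x) ≤ (1 + (-x)) ^ m :=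
      one_add_mul_le_pow (by linarith) m
    have h2 : (m:ℝ) * x ≤ 1/2 := by
      calc (m:ℝ) * x ≤ (m:ℝ) * (1/(2*m)) := by
            apply mul_le_mul_of_nonneg_left hxm hm0.le
        _ = 1/2 := by field_simp
    calc (1:ℝ)/2 ≤ 1 - (m:ℝ)*x := by linarith
      _ = 1 + (m:ℝ) * (-x) := by ring
      _ ≤ (1 + (-x)) ^ m := h1
      _ = (1 - x) ^ m := by ring_nf
  -- q ^ n ≤ (K*m)^α
  have hql : (q:ℝ) = l ^ α := by
    have he : Real.log l * α = Real.log q := by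
      rw [hα]; field_simp
    rw [Real.rpow_def_of_pos hl0, he, Real.exp_log hq0]
  have hqn : ((q:ℝ)) ^ n ≤ K ^ α * (m:ℝ) ^ α := by
    have h1 : ((q:ℝ)) ^ n = (l ^ n) ^ α := by
      rw [hql, ← Real.rpow_natCast (l ^ α) n, ← Real.rpow_mul hl0.le, mul_comm,
        Real.rpow_mul hl0.le, Real.rpow_natCast]
    rw [h1, ← Real.mul_rpow hK0.le hm0.le]
    exact Real.rpow_le_rpow (by positivity) hnK hαpos.le
  have hqninv : (K ^ α * (m:ℝ) ^ α)⁻¹ ≤ (((q:ℝ)) ^ n)⁻¹ := by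
    apply inv_anti₀ (by positivity) hqn
  -- put it together
  have hkey : (1/2) * K ^ (-α) * (m:ℝ) ^ (-α) ≤
      ((q : ℝ) ^ (n - 1 + 1))⁻¹ * (1 - (l - 1) / (l ^ (n - 1 + 1) - 1)) ^ m := by
    have hnn : n - 1 + 1 = n := Nat.sub_add_cancel hn1
    rw [hnn, ← hx]
    have hlhs : (1/2) * K ^ (-α) * (m:ℝ) ^ (-α) = (K ^ α * (m:ℝ) ^ α)⁻¹ * (1/2) := by
      rw [Real.rpow_neg hK0.le, Real.rpow_neg hm0.le, mul_inv]
      ring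
    rw [hlhs]
    exact mul_le_mul hqninv hbern (by norm_num) (by positivity)
  calc (1/2) * K ^ (-α) * (m:ℝ) ^ (-α)
      ≤ ((q : ℝ) ^ (n - 1 + 1))⁻¹ * (1 - (l - 1) / (l ^ (n - 1 + 1) - 1)) ^ m := hkey
    _ ≤ _ := Summable.le_tsum hsum (n-1) (fun i _ => hterm_nonneg i)
end

section
/- Let Γ = (V,E) be a connected locally finite rooted graph with root o, and let Z_n be the λ-homesick random walk on Γ for λ ≥ 1. Then for every integer r ≥ 1, P(max_{i < τ_o^+} dist(o, Z_i) ≥ r) ≤ (deg o)^{-1} · (∑_{i=0}^{r-1} |∂_E B_i|^{-1} λ^i)^{-1}, where τ_o^+ is the first return time to o. -/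
open scoped Classical

noncomputable section

/-- The transition kernel of the `λ`-homesick random walk on a rooted graph `(Γ, o)`:
the walk moves along each edge with probability proportional to its conductance
`λ^{-min(dist(o,·),dist(o,·))}`. -/
def homesickT {V : Type*} (G : SimpleGraph V) [G.LocallyFinite] (o : V) (l : ℝ)
    (v w : V) : ℝ :=
  if G.Adj v w then
    (l ^ (min (G.dist o v) (G.dist o w)))⁻¹ /
      ∑ u ∈ G.neighborFinset v, (l ^ (min (G.dist o v) (G.dist o u)))⁻¹
  else 0

/-- The number of (directed) edges leaving the ball of radius `i` around `o`. -/
def bdCount {V : Type*} (G : SimpleGraph V) (o : V) (i : ℕ) : ℕ :=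
  {q : V × V | G.Adj q.1 q.2 ∧ G.dist o q.1 ≤ i ∧ ¬ G.dist o q.2 ≤ i}.ncard

set_option linter.unusedSectionVars false
set_option linter.unusedVariables false
set_option maxHeartbeats 1000000

namespace Stmt11Aux
open Finset SimpleGraph

variable {V : Type*} (G : SimpleGraph V) [G.LocallyFinite]

/-- every vertex at positive distance has a neighbor one step closer to `o`. -/
lemma exists_closer_nbr (hconn : G.Connected) {o v : V} (hv : 0 < G.dist o v) :
    ∃ w, G.Adj v w ∧ G.dist o w + 1 ≤ G.dist o v := by
  obtain ⟨p, hp⟩ := hconn.exists_walk_length_eq_dist o v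
  have hnil : ¬ p.reverse.Nil := by
    rw [SimpleGraph.Walk.nil_iff_length_eq, SimpleGraph.Walk.length_reverse, hp]
    omega
  refine ⟨p.reverse.getVert 1, p.reverse.adj_snd hnil, ?_⟩
  have htl : p.reverse.tail.length + 1 = p.reverse.length :=
    SimpleGraph.Walk.length_tail_add_one hnil
  have : G.dist (p.reverse.getVert 1) o ≤ p.reverse.tail.length :=
    SimpleGraph.dist_le _
  rw [SimpleGraph.dist_comm] at this
  rw [SimpleGraph.Walk.length_reverse, hp] at htl
  omega

lemma ball_finite (hconn : G.Connected) (o : V) (i : ℕ) :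
    {v : V | G.dist o v ≤ i}.Finite := by
  induction i with
  | zero =>
    refine Set.Finite.subset (Set.finite_singleton o) ?_
    intro v hv
    simp only [Set.mem_setOf_eq, Nat.le_zero] at hv
    simp [((hconn.dist_eq_zero_iff).mp hv).symm]
  | succ i ih =>
    refine Set.Finite.subset (ih.union (Set.Finite.biUnion ih
      (fun w _ => (G.neighborSet w).toFinite))) ?_
    intro v hv
    simp only [Set.mem_setOf_eq] at hv
    by_cases hvi : G.dist o v ≤ i
    · exact Or.inl hvi
    · have hpos : 0 < G.dist o v := by omega
      obtain ⟨w, hadj, hw⟩ := exists_closer_nbr G hconn hpos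
      refine Or.inr ?_
      simp only [Set.mem_iUnion, Set.mem_setOf_eq]
      exact ⟨w, by omega, by simpa using hadj.symm⟩

lemma adj_dist_le (hconn : G.Connected) {o v w : V} (hvw : G.Adj v w) :
    G.dist o w ≤ G.dist o v + 1 := by
  have h1 : G.dist v w = 1 := SimpleGraph.dist_eq_one_iff_adj.mpr hvw
  have := hconn.dist_triangle (u := o) (v := v) (w := w)
  omega

/-- the set of directed edges from sphere `i` to sphere `j`. -/
def QS (G : SimpleGraph V) (o : V) (i j : ℕ) : Set (V × V) :=
  {q : V × V | G.Adj q.1 q.2 ∧ G.dist o q.1 = i ∧ G.dist o q.2 = j}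

lemma QS_finite (hconn : G.Connected) (o : V) (i j : ℕ) : (QS G o i j).Finite := by
  refine Set.Finite.subset ((ball_finite G hconn o i).prod (ball_finite G hconn o j)) ?_
  rintro ⟨v, w⟩ ⟨_, h1, h2⟩
  exact ⟨le_of_eq h1, le_of_eq h2⟩

/-- finset of directed edges from sphere `i` to sphere `j`. -/
def QF (hconn : G.Connected) (o : V) (i j : ℕ) : Finset (V × V) :=
  (QS_finite G hconn o i j).toFinset

lemma mem_QF (hconn : G.Connected) (o : V) (i j : ℕ) (q : V × V) :
    q ∈ QF G hconn o i j ↔ G.Adj q.1 q.2 ∧ G.dist o q.1 = i ∧ G.dist o q.2 = j := by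
  simp [QF, QS]

/-- finset sphere of radius `i`. -/
lemma sph_finite (hconn : G.Connected) (o : V) (i : ℕ) :
    {v : V | G.dist o v = i}.Finite :=
  Set.Finite.subset (ball_finite G hconn o i) (fun v hv => le_of_eq hv)

def sphF (hconn : G.Connected) (o : V) (i : ℕ) : Finset V :=
  (sph_finite G hconn o i).toFinset

lemma mem_sphF (hconn : G.Connected) (o : V) (i : ℕ) (v : V) :
    v ∈ sphF G hconn o i ↔ G.dist o v = i := by
  simp [sphF]

/-- reindexing pairs sums as double sums. -/
lemma sum_QF (hconn : G.Connected) (o : V) (i j : ℕ) (F : V → V → ℝ) :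
    ∑ q ∈ QF G hconn o i j, F q.1 q.2 =
      ∑ v ∈ sphF G hconn o i,
        ∑ w ∈ (G.neighborFinset v).filter (fun w => G.dist o w = j), F v w := by
  rw [Finset.sum_sigma' (sphF G hconn o i)
    (fun v => (G.neighborFinset v).filter (fun w => G.dist o w = j)) (fun v w => F v w)]
  refine Finset.sum_nbij' (fun q => ⟨q.1, q.2⟩) (fun x => (x.1, x.2)) ?_ ?_ ?_ ?_ ?_
  · rintro ⟨v, w⟩ hq
    rw [mem_QF] at hq
    simp only [Finset.mem_sigma, mem_sphF, Finset.mem_filter, mem_neighborFinset]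
    exact ⟨hq.2.1, hq.1, hq.2.2⟩
  · rintro ⟨v, w⟩ hx
    simp only [Finset.mem_sigma, mem_sphF, Finset.mem_filter, mem_neighborFinset] at hx
    rw [mem_QF]
    exact ⟨hx.2.1, hx.1, hx.2.2⟩
  · intro q _; rfl
  · intro x _; rfl
  · intro q _; rfl

/-- swapping orientation of pair sums. -/
lemma sum_QF_swap (hconn : G.Connected) (o : V) (i j : ℕ) (F : V × V → ℝ) :
    ∑ q ∈ QF G hconn o i j, F q = ∑ q ∈ QF G hconn o j i, F q.swap := by
  refine Finset.sum_nbij' Prod.swap Prod.swap ?_ ?_ ?_ ?_ ?_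
  · rintro ⟨v, w⟩ hq; rw [mem_QF] at hq ⊢; exact ⟨hq.1.symm, hq.2.2, hq.2.1⟩
  · rintro ⟨v, w⟩ hq; rw [mem_QF] at hq ⊢; exact ⟨hq.1.symm, hq.2.2, hq.2.1⟩
  · intro q _; rfl
  · intro q _; rfl
  · intro q _; rfl


variable (hconn : G.Connected) (o : V) (l : ℝ) (h : V → ℝ)

/-- the conductance of the edge `(v,w)`. -/
def cnd (G : SimpleGraph V) (o : V) (l : ℝ) (v w : V) : ℝ :=
  (l ^ min (G.dist o v) (G.dist o w))⁻¹

lemma cnd_symm (o : V) (l : ℝ) (v w : V) : cnd G o l v w = cnd G o l w v := by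
  rw [cnd, cnd, min_comm]

lemma cnd_pos (o : V) {l : ℝ} (hl : 1 ≤ l) (v w : V) : 0 < cnd G o l v w :=
  inv_pos.mpr (pow_pos (lt_of_lt_of_le one_pos hl) _)

/-- reformulated harmonicity. -/
lemma harm_sum (hconn : G.Connected) (o : V) {l : ℝ} (hl : 1 ≤ l) (h : V → ℝ)
    {v : V} (hpos : 0 < G.dist o v)
    (hv : h v = ∑ w ∈ G.neighborFinset v, homesickT G o l v w * h w) :
    ∑ w ∈ G.neighborFinset v, cnd G o l v w * (h w - h v) = 0 := by
  set Cv := ∑ u ∈ G.neighborFinset v, cnd G o l v u with hCv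
  have hCvpos : 0 < Cv := by
    obtain ⟨w, hadj, -⟩ := exists_closer_nbr G hconn hpos
    exact Finset.sum_pos (fun u _ => cnd_pos G o hl v u)
      ⟨w, (G.mem_neighborFinset v w).mpr hadj⟩
  have hT : ∀ w ∈ G.neighborFinset v, homesickT G o l v w = cnd G o l v w / Cv := by
    intro w hw
    rw [homesickT, if_pos ((G.mem_neighborFinset v w).mp hw)]
    rfl
  have hsum : ∑ w ∈ G.neighborFinset v, cnd G o l v w * h w = Cv * h v := by
    have hv' : Cv * h v = Cv * ∑ w ∈ G.neighborFinset v, homesickT G o l v w * h w := by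
      rw [← hv]
    rw [hv', Finset.mul_sum]
    refine Finset.sum_congr rfl (fun w hw => ?_)
    rw [hT w hw]
    field_simp
  have : ∑ w ∈ G.neighborFinset v, cnd G o l v w * (h w - h v)
      = (∑ w ∈ G.neighborFinset v, cnd G o l v w * h w) - Cv * h v := by
    rw [hCv, Finset.sum_mul, ← Finset.sum_sub_distrib]
    exact Finset.sum_congr rfl (fun w _ => by ring)
  rw [this, hsum, sub_self]

/-- neighbours of a vertex at distance `i+1` split into three spheres. -/
lemma nbhd_split (hconn : G.Connected) (o : V) {v : V} {i : ℕ}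
    (hd : G.dist o v = i + 1) (F : V → ℝ) :
    ∑ w ∈ G.neighborFinset v, F w =
      ∑ w ∈ (G.neighborFinset v).filter (fun w => G.dist o w = i), F w +
      ∑ w ∈ (G.neighborFinset v).filter (fun w => G.dist o w = i+1), F w +
      ∑ w ∈ (G.neighborFinset v).filter (fun w => G.dist o w = i+2), F w := by
  have hb : ∀ w ∈ G.neighborFinset v, i ≤ G.dist o w ∧ G.dist o w ≤ i + 2 := by
    intro w hw
    rw [G.mem_neighborFinset] at hw
    have h1 := adj_dist_le G hconn (o := o) hw
    have h2 := adj_dist_le G hconn (o := o) hw.symm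
    omega
  have e2 : (G.neighborFinset v).filter (fun w => ¬ G.dist o w = i ∧ G.dist o w = i+1)
      = (G.neighborFinset v).filter (fun w => G.dist o w = i+1) := by
    apply Finset.filter_congr
    intro w hw
    constructor
    · rintro ⟨-, h2⟩; exact h2
    · intro h2; exact ⟨by omega, h2⟩
  have e3 : (G.neighborFinset v).filter (fun w => ¬ G.dist o w = i ∧ ¬ G.dist o w = i+1)
      = (G.neighborFinset v).filter (fun w => G.dist o w = i+2) := by
    apply Finset.filter_congr
    intro w hw
    have := hb w hw
    constructor
    · rintro ⟨h1, h2⟩; omega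
    · intro h2; exact ⟨by omega, by omega⟩
  rw [← Finset.sum_filter_add_sum_filter_not (G.neighborFinset v)
      (fun w => G.dist o w = i) F,
    ← Finset.sum_filter_add_sum_filter_not
      ((G.neighborFinset v).filter (fun w => ¬ G.dist o w = i))
      (fun w => G.dist o w = i+1) F,
    Finset.filter_filter, Finset.filter_filter, e2, e3]
  ring

/-- summing the harmonic relation weighted by `g` over the sphere of radius `i+1`. -/
lemma sphere_identity (hconn : G.Connected) (o : V) {l : ℝ} (hl : 1 ≤ l) (h : V → ℝ)
    (i : ℕ)
    (hharm : ∀ v, G.dist o v = i + 1 →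
      h v = ∑ w ∈ G.neighborFinset v, homesickT G o l v w * h w)
    (g : V → ℝ) :
    ∑ q ∈ QF G hconn o (i+1) i, cnd G o l q.1 q.2 * (h q.2 - h q.1) * g q.1 +
    ∑ q ∈ QF G hconn o (i+1) (i+1), cnd G o l q.1 q.2 * (h q.2 - h q.1) * g q.1 +
    ∑ q ∈ QF G hconn o (i+1) (i+2), cnd G o l q.1 q.2 * (h q.2 - h q.1) * g q.1 = 0 := by
  rw [sum_QF G hconn o (i+1) i (fun v w => cnd G o l v w * (h w - h v) * g v),
    sum_QF G hconn o (i+1) (i+1) (fun v w => cnd G o l v w * (h w - h v) * g v),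
    sum_QF G hconn o (i+1) (i+2) (fun v w => cnd G o l v w * (h w - h v) * g v),
    ← Finset.sum_add_distrib, ← Finset.sum_add_distrib]
  refine Finset.sum_eq_zero (fun v hv => ?_)
  rw [mem_sphF] at hv
  have key : ∑ w ∈ G.neighborFinset v, cnd G o l v w * (h w - h v) * g v
      = (∑ w ∈ G.neighborFinset v, cnd G o l v w * (h w - h v)) * g v :=
    (Finset.sum_mul _ _ _).symm
  have hz : ∑ w ∈ G.neighborFinset v, cnd G o l v w * (h w - h v) = 0 :=
    harm_sum G hconn o hl h (by omega) (hharm v hv)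
  rw [← nbhd_split G hconn o hv, key, hz, zero_mul]


/-- the flux through the cut between spheres `i` and `i+1`. -/
def Phi (i : ℕ) : ℝ :=
  ∑ q ∈ QF G hconn o i (i+1), cnd G o l q.1 q.2 * (h q.2 - h q.1)

/-- the flux weighted by the potential at the far end. -/
def Psi (i : ℕ) : ℝ :=
  ∑ q ∈ QF G hconn o i (i+1), cnd G o l q.1 q.2 * (h q.2 - h q.1) * h q.2

/-- the energy of the cut between spheres `i` and `i+1`. -/
def Ee (i : ℕ) : ℝ :=
  ∑ q ∈ QF G hconn o i (i+1), cnd G o l q.1 q.2 * (h q.2 - h q.1) ^ 2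

lemma conservation {l : ℝ} (hl : 1 ≤ l) (i : ℕ)
    (hharm : ∀ v, G.dist o v = i + 1 →
      h v = ∑ w ∈ G.neighborFinset v, homesickT G o l v w * h w) :
    Phi G hconn o l h (i+1) = Phi G hconn o l h i := by
  have key := sphere_identity G hconn o hl h i hharm (fun _ => 1)
  have t1 : ∑ q ∈ QF G hconn o (i+1) i,
      cnd G o l q.1 q.2 * (h q.2 - h q.1) * (1:ℝ) = - Phi G hconn o l h i := by
    rw [sum_QF_swap G hconn o (i+1) i, Phi, ← Finset.sum_neg_distrib]
    refine Finset.sum_congr rfl (fun q _ => ?_)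
    simp only [Prod.fst_swap, Prod.snd_swap, mul_one]
    rw [cnd_symm]
    ring
  have t2 : ∑ q ∈ QF G hconn o (i+1) (i+1),
      cnd G o l q.1 q.2 * (h q.2 - h q.1) * (1:ℝ) = 0 := by
    have hsw := sum_QF_swap G hconn o (i+1) (i+1)
      (fun q => cnd G o l q.1 q.2 * (h q.2 - h q.1) * (1:ℝ))
    have : ∑ q ∈ QF G hconn o (i+1) (i+1),
        (cnd G o l q.swap.1 q.swap.2 * (h q.swap.2 - h q.swap.1) * (1:ℝ))
        = - ∑ q ∈ QF G hconn o (i+1) (i+1),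
          cnd G o l q.1 q.2 * (h q.2 - h q.1) * (1:ℝ) := by
      rw [← Finset.sum_neg_distrib]
      refine Finset.sum_congr rfl (fun q _ => ?_)
      simp only [Prod.fst_swap, Prod.snd_swap]
      rw [cnd_symm]
      ring
    rw [this] at hsw
    linarith
  have t3 : ∑ q ∈ QF G hconn o (i+1) (i+2),
      cnd G o l q.1 q.2 * (h q.2 - h q.1) * (1:ℝ) = Phi G hconn o l h (i+1) := by
    rw [Phi]
    exact Finset.sum_congr rfl (fun q _ => by ring)
  rw [t1, t2, t3] at key
  linarith

lemma psi_step {l : ℝ} (hl : 1 ≤ l) (i : ℕ)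
    (hharm : ∀ v, G.dist o v = i + 1 →
      h v = ∑ w ∈ G.neighborFinset v, homesickT G o l v w * h w) :
    Ee G hconn o l h (i+1) ≤ Psi G hconn o l h (i+1) - Psi G hconn o l h i := by
  have key := sphere_identity G hconn o hl h i hharm h
  have t1 : ∑ q ∈ QF G hconn o (i+1) i,
      cnd G o l q.1 q.2 * (h q.2 - h q.1) * h q.1 = - Psi G hconn o l h i := by
    rw [sum_QF_swap G hconn o (i+1) i, Psi, ← Finset.sum_neg_distrib]
    refine Finset.sum_congr rfl (fun q _ => ?_)
    simp only [Prod.fst_swap, Prod.snd_swap]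
    rw [cnd_symm]
    ring
  -- horizontal term is nonpositive
  have hHle : ∑ q ∈ QF G hconn o (i+1) (i+1),
      cnd G o l q.1 q.2 * (h q.2 - h q.1) * h q.1 ≤ 0 := by
    have hsw := sum_QF_swap G hconn o (i+1) (i+1)
      (fun q => cnd G o l q.1 q.2 * (h q.2 - h q.1) * h q.1)
    have hkey : (∑ q ∈ QF G hconn o (i+1) (i+1),
          cnd G o l q.1 q.2 * (h q.2 - h q.1) * h q.1) +
        (∑ q ∈ QF G hconn o (i+1) (i+1),
          cnd G o l q.swap.1 q.swap.2 * (h q.swap.2 - h q.swap.1) * h q.swap.1) =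
        ∑ q ∈ QF G hconn o (i+1) (i+1),
          - (cnd G o l q.1 q.2 * (h q.2 - h q.1) ^ 2) := by
      rw [← Finset.sum_add_distrib]
      refine Finset.sum_congr rfl (fun q _ => ?_)
      simp only [Prod.fst_swap, Prod.snd_swap]
      rw [cnd_symm G o l q.2 q.1]
      ring
    have hnonpos : ∑ q ∈ QF G hconn o (i+1) (i+1),
        - (cnd G o l q.1 q.2 * (h q.2 - h q.1) ^ 2) ≤ 0 := by
      refine Finset.sum_nonpos (fun q _ => ?_)
      have := cnd_pos G o hl q.1 q.2
      nlinarith [sq_nonneg (h q.2 - h q.1)]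
    linarith
  -- identity: -Psi i + H + phi(i+1) = 0
  have hid : - Psi G hconn o l h i +
      (∑ q ∈ QF G hconn o (i+1) (i+1), cnd G o l q.1 q.2 * (h q.2 - h q.1) * h q.1) +
      (∑ q ∈ QF G hconn o (i+1) (i+2), cnd G o l q.1 q.2 * (h q.2 - h q.1) * h q.1)
      = 0 := by
    rw [← t1]; exact key
  have hE : Ee G hconn o l h (i+1) = Psi G hconn o l h (i+1) -
      ∑ q ∈ QF G hconn o (i+1) (i+2), cnd G o l q.1 q.2 * (h q.2 - h q.1) * h q.1 := by
    rw [Ee, Psi, ← Finset.sum_sub_distrib]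
    refine Finset.sum_congr rfl (fun q _ => ?_)
    ring
  linarith


/-- `cnd` is constant on the cut between spheres `i` and `i+1`. -/
lemma cnd_cut {i : ℕ} {q : V × V} (hq : q ∈ QF G hconn o i (i+1)) :
    cnd G o l q.1 q.2 = (l ^ i)⁻¹ := by
  rw [mem_QF] at hq
  rw [cnd, hq.2.1, hq.2.2, min_eq_left (Nat.le_succ i)]

/-- the sphere of radius 0 is just `{o}`. -/
lemma sphF_zero : sphF G hconn o 0 = {o} := by
  ext v
  rw [mem_sphF, Finset.mem_singleton]
  constructor
  · intro hv; exact ((hconn.dist_eq_zero_iff).mp hv).symm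
  · rintro rfl; exact SimpleGraph.dist_self

/-- sums over the innermost cut are sums over the neighbors of `o`. -/
lemma sum_QF01 (F : V → V → ℝ) :
    ∑ q ∈ QF G hconn o 0 1, F q.1 q.2 = ∑ w ∈ G.neighborFinset o, F o w := by
  rw [sum_QF G hconn o 0 1 F, sphF_zero, Finset.sum_singleton]
  congr 1
  apply Finset.filter_true_of_mem
  intro w hw
  rw [G.mem_neighborFinset] at hw
  exact SimpleGraph.dist_eq_one_iff_adj.mpr hw

lemma Ee_zero (h0 : h o = 0) :
    Ee G hconn o l h 0 = Psi G hconn o l h 0 := by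
  rw [Ee, Psi]
  refine Finset.sum_congr rfl (fun q hq => ?_)
  rw [mem_QF] at hq
  have : q.1 = o := (hconn.dist_eq_zero_iff).mp hq.2.1 |>.symm
  rw [this, h0]
  ring

lemma Phi_zero (h0 : h o = 0) :
    Phi G hconn o l h 0 = ∑ w ∈ G.neighborFinset o, h w := by
  rw [Phi, sum_QF01 G hconn o (fun v w => cnd G o l v w * (h w - h v))]
  refine Finset.sum_congr rfl (fun w hw => ?_)
  rw [cnd, SimpleGraph.dist_self, h0]
  simp

/-- the left-hand side of the statement equals `(deg o)⁻¹ * Phi 0`. -/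
lemma lhs_eq (h0 : h o = 0) :
    ∑ w ∈ G.neighborFinset o, homesickT G o l o w * h w =
      ((G.degree o : ℝ))⁻¹ * Phi G hconn o l h 0 := by
  rw [Phi_zero G hconn o l h h0, Finset.mul_sum]
  refine Finset.sum_congr rfl (fun w hw => ?_)
  rw [G.mem_neighborFinset] at hw
  rw [homesickT, if_pos hw, SimpleGraph.dist_self]
  have hden : ∑ u ∈ G.neighborFinset o, (l ^ (min 0 (G.dist o u)))⁻¹
      = (G.degree o : ℝ) := by
    rw [SimpleGraph.degree]
    rw [Finset.sum_congr rfl (fun u _ => by rw [Nat.zero_min, pow_zero, inv_one])]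
    simp
  rw [hden, Nat.zero_min, pow_zero, inv_one]
  ring

/-- Cauchy–Schwarz on the cut. -/
lemma cauchy_schwarz {l : ℝ} (hl : 1 ≤ l) (i : ℕ) :
    Phi G hconn o l h i ^ 2 ≤
      (((QF G hconn o i (i+1)).card : ℝ) * (l ^ i)⁻¹) * Ee G hconn o l h i := by
  have hc : ∀ q ∈ QF G hconn o i (i+1), (0:ℝ) ≤ cnd G o l q.1 q.2 :=
    fun q _ => (cnd_pos G o hl q.1 q.2).le
  have key := Finset.sum_mul_sq_le_sq_mul_sq (QF G hconn o i (i+1))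
    (fun q => Real.sqrt (cnd G o l q.1 q.2))
    (fun q => Real.sqrt (cnd G o l q.1 q.2) * (h q.2 - h q.1))
  have e1 : ∑ q ∈ QF G hconn o i (i+1),
      Real.sqrt (cnd G o l q.1 q.2) * (Real.sqrt (cnd G o l q.1 q.2) * (h q.2 - h q.1))
      = Phi G hconn o l h i := by
    rw [Phi]
    refine Finset.sum_congr rfl (fun q hq => ?_)
    rw [← mul_assoc, Real.mul_self_sqrt (hc q hq)]
  have e2 : ∑ q ∈ QF G hconn o i (i+1), Real.sqrt (cnd G o l q.1 q.2) ^ 2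
      = ((QF G hconn o i (i+1)).card : ℝ) * (l ^ i)⁻¹ := by
    rw [Finset.sum_congr rfl (fun q hq => by
      rw [Real.sq_sqrt (hc q hq), cnd_cut G hconn o l hq])]
    rw [Finset.sum_const, nsmul_eq_mul]
  have e3 : ∑ q ∈ QF G hconn o i (i+1),
      (Real.sqrt (cnd G o l q.1 q.2) * (h q.2 - h q.1)) ^ 2 = Ee G hconn o l h i := by
    rw [Ee]
    refine Finset.sum_congr rfl (fun q hq => ?_)
    rw [mul_pow, Real.sq_sqrt (hc q hq)]
  rw [e1, e2, e3] at key
  exact key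

/-- identification of the boundary count with the cut cardinality. -/
lemma bdCount_eq (i : ℕ) : bdCount G o i = (QF G hconn o i (i+1)).card := by
  have hset : {q : V × V | G.Adj q.1 q.2 ∧ G.dist o q.1 ≤ i ∧ ¬ G.dist o q.2 ≤ i}
      = QS G o i (i+1) := by
    ext ⟨v, w⟩
    simp only [Set.mem_setOf_eq, QS]
    constructor
    · rintro ⟨hadj, h1, h2⟩
      have d1 := adj_dist_le G hconn (o := o) hadj
      have d2 := adj_dist_le G hconn (o := o) hadj.symm
      exact ⟨hadj, by omega, by omega⟩
    · rintro ⟨hadj, h1, h2⟩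
      exact ⟨hadj, by omega, by omega⟩
  rw [bdCount, hset, QF, Set.ncard_eq_toFinset_card _ (QS_finite G hconn o i (i+1))]


end Stmt11Aux

/-- For the `λ`-homesick random walk,
`P(max_{i<τ_o^+} dist(o,Z_i) ≥ r) ≤ (deg o)⁻¹ (∑_{i<r} |∂_E B_i|⁻¹ λ^i)⁻¹`.
The escape probability is expressed through the hitting-probability function `h`: `h` is the
(unique, by the maximum principle) function with `h(o) = 0`, `h ≡ 1` on the sphere `K_r`,
`0 ≤ h ≤ 1`, and harmonic at every vertex strictly between `o` and `K_r`; the probability of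
reaching `K_r` before returning to `o` is `∑_w T(o,w) h(w)`. -/
theorem stmt_11 {V : Type*} (G : SimpleGraph V) [G.LocallyFinite] (hconn : G.Connected)
    (o : V) (l : ℝ) (hl : 1 ≤ l) (r : ℕ) (hr : 1 ≤ r)
    (h : V → ℝ) (h0 : h o = 0) (hK : ∀ v, G.dist o v = r → h v = 1)
    (hbdd : ∀ v, 0 ≤ h v ∧ h v ≤ 1)
    (hharm : ∀ v, 0 < G.dist o v → G.dist o v < r →
      h v = ∑ w ∈ G.neighborFinset v, homesickT G o l v w * h w) :
    ∑ w ∈ G.neighborFinset o, homesickT G o l o w * h w ≤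
      ((G.degree o : ℝ))⁻¹ * (∑ i ∈ Finset.range r, ((bdCount G o i : ℝ))⁻¹ * l ^ i)⁻¹ := by
  classical
  open Stmt11Aux in
  have hl0 : (0:ℝ) < l := lt_of_lt_of_le one_pos hl
  -- notation
  set I := Phi G hconn o l h 0 with hI
  -- harmonicity at every sphere i+1 with i+1 < r
  have hsph : ∀ i : ℕ, i + 1 < r → ∀ v, G.dist o v = i + 1 →
      h v = ∑ w ∈ G.neighborFinset v, homesickT G o l v w * h w := by
    intro i hi v hv
    exact hharm v (by omega) (by omega)
  -- flux conservation up to radius r-1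
  have hcons : ∀ k : ℕ, k + 1 ≤ r → Phi G hconn o l h k = I := by
    intro k
    induction k with
    | zero => intro _; rfl
    | succ k ih =>
      intro hk
      rw [conservation G hconn o h hl k (hsph k (by omega)), ih (by omega)]
  -- energy bound by telescoping
  have htel : ∀ k : ℕ, k + 1 ≤ r →
      ∑ i ∈ Finset.range (k+1), Ee G hconn o l h i ≤ Psi G hconn o l h k := by
    intro k
    induction k with
    | zero =>
      intro _
      rw [Finset.sum_range_one, Ee_zero G hconn o l h h0]
    | succ k ih =>
      intro hk
      rw [Finset.sum_range_succ]
      have := psi_step G hconn o h hl k (hsph k (by omega))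
      have := ih (by omega)
      linarith
  -- Psi (r-1) = Phi (r-1) = I
  obtain ⟨m, rfl⟩ : ∃ m, r = m + 1 := ⟨r - 1, by omega⟩
  have hPsiPhi : Psi G hconn o l h m = Phi G hconn o l h m := by
    rw [Psi, Phi]
    refine Finset.sum_congr rfl (fun q hq => ?_)
    rw [mem_QF] at hq
    rw [hK q.2 hq.2.2, mul_one]
  have hEI : ∑ i ∈ Finset.range (m+1), Ee G hconn o l h i ≤ I := by
    have := htel m (by omega)
    rw [hPsiPhi, hcons m (by omega)] at this
    exact this
  -- nonnegativity of the RHS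
  have hRnn : (0:ℝ) ≤
      ((G.degree o : ℝ))⁻¹ * (∑ i ∈ Finset.range (m+1), ((bdCount G o i : ℝ))⁻¹ * l ^ i)⁻¹ := by
    apply mul_nonneg (inv_nonneg.mpr (Nat.cast_nonneg _))
    apply inv_nonneg.mpr
    exact Finset.sum_nonneg (fun i _ => mul_nonneg (inv_nonneg.mpr (Nat.cast_nonneg _))
      (le_of_lt (pow_pos hl0 i)))
  rw [lhs_eq G hconn o l h h0, ← hI]
  rcases le_or_gt I 0 with hIle | hIpos
  · refine le_trans ?_ hRnn
    exact mul_nonpos_of_nonneg_of_nonpos (inv_nonneg.mpr (Nat.cast_nonneg _)) hIle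
  -- main case : I > 0
  have hcard : ∀ i, i < m + 1 → 0 < ((QF G hconn o i (i+1)).card : ℝ) := by
    intro i hi
    by_contra hc
    push_neg at hc
    have hzero : (QF G hconn o i (i+1)) = ∅ := by
      have := Nat.cast_nonneg (α := ℝ) (QF G hconn o i (i+1)).card
      have : (QF G hconn o i (i+1)).card = 0 := by exact_mod_cast le_antisymm hc this
      exact Finset.card_eq_zero.mp this
    have : Phi G hconn o l h i = 0 := by
      rw [Phi, hzero, Finset.sum_empty]
    rw [hcons i (by omega)] at this
    linarith
  set S := ∑ i ∈ Finset.range (m+1), ((bdCount G o i : ℝ))⁻¹ * l ^ i with hS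
  have hSpos : 0 < S := by
    rw [hS]
    refine Finset.sum_pos' (fun i hi => mul_nonneg (inv_nonneg.mpr (Nat.cast_nonneg _))
      (le_of_lt (pow_pos hl0 i))) ⟨0, Finset.mem_range.mpr (by omega), ?_⟩
    rw [bdCount_eq G hconn o 0]
    have := hcard 0 (by omega)
    positivity
  -- termwise lower bound on energies
  have hterm : ∀ i ∈ Finset.range (m+1),
      I ^ 2 * (((bdCount G o i : ℝ))⁻¹ * l ^ i) ≤ Ee G hconn o l h i := by
    intro i hi
    rw [Finset.mem_range] at hi
    have hcs := cauchy_schwarz G hconn o h hl i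
    rw [hcons i (by omega)] at hcs
    have hci := hcard i hi
    have hpi : (0:ℝ) < l ^ i := pow_pos hl0 i
    rw [bdCount_eq G hconn o i]
    have hmul : (0:ℝ) ≤ ((QF G hconn o i (i+1)).card : ℝ)⁻¹ * l ^ i :=
      mul_nonneg (inv_nonneg.mpr (Nat.cast_nonneg _)) hpi.le
    calc I ^ 2 * (((QF G hconn o i (i+1)).card : ℝ)⁻¹ * l ^ i)
        ≤ ((((QF G hconn o i (i+1)).card : ℝ) * (l ^ i)⁻¹) * Ee G hconn o l h i) *
            (((QF G hconn o i (i+1)).card : ℝ)⁻¹ * l ^ i) :=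
          mul_le_mul_of_nonneg_right hcs hmul
      _ = Ee G hconn o l h i := by
          field_simp
  have hsum : I ^ 2 * S ≤ I := by
    rw [hS, Finset.mul_sum]
    calc ∑ i ∈ Finset.range (m+1), I ^ 2 * (((bdCount G o i : ℝ))⁻¹ * l ^ i)
        ≤ ∑ i ∈ Finset.range (m+1), Ee G hconn o l h i := Finset.sum_le_sum hterm
      _ ≤ I := hEI
  have hIS : I ≤ S⁻¹ := by
    rw [← mul_le_mul_iff_of_pos_right hSpos, inv_mul_cancel₀ hSpos.ne']
    nlinarith
  exact mul_le_mul_of_nonneg_left hIS (inv_nonneg.mpr (Nat.cast_nonneg _))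
end
end
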